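/- Let f, g ∈ F(x,y) be rational functions in two variables over a field F of characteristic zero satisfying D_y(f) = D_x(g). Then the denominator of f (as an element of F(x)(y), written in lowest terms over F(x)[y]) divides the denominator of g in F(x)[y]. -/

import Mathlib

open Polynomial

/-- The derivation `d/dy` on a field of rational functions `E(y)` (quotient rule on the
reduced representation `num/denom`). -/
noncomputable def Dr {E : Type*} [Field E] (f : RatFunc E) : RatFunc E :=
  (algebraMap E[X] (RatFunc E) (derivative f.num) * algebraMap E[X] (RatFunc E) f.denom -
      algebraMap E[X] (RatFunc E) f.num * algebraMap E[X] (RatFunc E) (derivative f.denom)) /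
    (algebraMap E[X] (RatFunc E) f.denom) ^ 2

/-- Coefficientwise derivation `D_x` on polynomials in `y` over `F(x)`. -/
noncomputable def DxP {F : Type*} [Field F] (p : Polynomial (RatFunc F)) :
    Polynomial (RatFunc F) :=
  p.sum fun n c => Polynomial.C (Dr c) * Polynomial.X ^ n

/-- The derivation `D_x` on `F(x,y)`, viewed as `F(x)(y)`. -/
noncomputable def DxR {F : Type*} [Field F] (f : RatFunc (RatFunc F)) : RatFunc (RatFunc F) :=
  (algebraMap _ (RatFunc (RatFunc F)) (DxP f.num) * algebraMap _ _ f.denom -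
      algebraMap _ (RatFunc (RatFunc F)) f.num * algebraMap _ _ (DxP f.denom)) /
    (algebraMap (Polynomial (RatFunc F)) (RatFunc (RatFunc F)) f.denom) ^ 2

section Aux

variable {E : Type*} [Field E]

lemma Dr_spec (a b : E[X]) (hb : b ≠ 0) :
    Dr (algebraMap E[X] (RatFunc E) a / algebraMap E[X] (RatFunc E) b) =
      (algebraMap E[X] (RatFunc E) (derivative a) * algebraMap E[X] (RatFunc E) b -
        algebraMap E[X] (RatFunc E) a * algebraMap E[X] (RatFunc E) (derivative b)) /
      (algebraMap E[X] (RatFunc E) b) ^ 2 := by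
  set f : RatFunc E := algebraMap E[X] (RatFunc E) a / algebraMap E[X] (RatFunc E) b with hf
  have hbb : algebraMap E[X] (RatFunc E) b ≠ 0 := RatFunc.algebraMap_ne_zero hb
  have hdd : algebraMap E[X] (RatFunc E) f.denom ≠ 0 :=
    RatFunc.algebraMap_ne_zero f.denom_ne_zero
  have hcross : algebraMap E[X] (RatFunc E) (f.num * b) =
      algebraMap E[X] (RatFunc E) (a * f.denom) := by
    rw [map_mul, map_mul, ← div_eq_div_iff hdd hbb, RatFunc.num_div_denom]
  have hkey : f.num * b = a * f.denom := IsFractionRing.injective E[X] (RatFunc E) hcross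
  have hkey' : derivative f.num * b + f.num * derivative b
      = derivative a * f.denom + a * derivative f.denom := by
    have := congrArg derivative hkey
    simpa [derivative_mul] using this
  have main : (derivative f.num * f.denom - f.num * derivative f.denom) * b ^ 2
      = (derivative a * b - a * derivative b) * f.denom ^ 2 := by
    linear_combination (b * f.denom) * hkey' -
      (derivative b * f.denom + b * derivative f.denom) * hkey
  unfold Dr
  rw [div_eq_div_iff (pow_ne_zero 2 hdd) (pow_ne_zero 2 hbb)]
  have h2 := congrArg (algebraMap E[X] (RatFunc E)) main
  simpa only [map_mul, map_sub, map_pow] using h2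

lemma Dr_zero : Dr (0 : RatFunc E) = 0 := by
  simp [Dr, RatFunc.num_zero]

lemma Dr_add (u v : RatFunc E) : Dr (u + v) = Dr u + Dr v := by
  have hu : algebraMap E[X] (RatFunc E) u.denom ≠ 0 :=
    RatFunc.algebraMap_ne_zero u.denom_ne_zero
  have hv : algebraMap E[X] (RatFunc E) v.denom ≠ 0 :=
    RatFunc.algebraMap_ne_zero v.denom_ne_zero
  have hrep : u + v = algebraMap E[X] (RatFunc E) (u.num * v.denom + u.denom * v.num) /
      algebraMap E[X] (RatFunc E) (u.denom * v.denom) := by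
    conv_lhs => rw [← RatFunc.num_div_denom u, ← RatFunc.num_div_denom v]
    rw [div_add_div _ _ hu hv, map_mul, map_add, map_mul, map_mul]
  rw [hrep, Dr_spec _ _ (mul_ne_zero u.denom_ne_zero v.denom_ne_zero)]
  unfold Dr
  simp only [derivative_add, derivative_mul, map_add, map_mul]
  field_simp
  ring

lemma Dr_mul (u v : RatFunc E) : Dr (u * v) = Dr u * v + u * Dr v := by
  obtain ⟨nu, du, hdu0, hu'⟩ : ∃ n d, d ≠ 0 ∧
      u = algebraMap E[X] (RatFunc E) n / algebraMap E[X] (RatFunc E) d :=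
    ⟨u.num, u.denom, u.denom_ne_zero, (RatFunc.num_div_denom u).symm⟩
  obtain ⟨nv, dv, hdv0, hv'⟩ : ∃ n d, d ≠ 0 ∧
      v = algebraMap E[X] (RatFunc E) n / algebraMap E[X] (RatFunc E) d :=
    ⟨v.num, v.denom, v.denom_ne_zero, (RatFunc.num_div_denom v).symm⟩
  subst hu' hv'
  have hdu : algebraMap E[X] (RatFunc E) du ≠ 0 := RatFunc.algebraMap_ne_zero hdu0
  have hdv : algebraMap E[X] (RatFunc E) dv ≠ 0 := RatFunc.algebraMap_ne_zero hdv0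
  have hrep : algebraMap E[X] (RatFunc E) nu / algebraMap E[X] (RatFunc E) du *
      (algebraMap E[X] (RatFunc E) nv / algebraMap E[X] (RatFunc E) dv) =
      algebraMap E[X] (RatFunc E) (nu * nv) / algebraMap E[X] (RatFunc E) (du * dv) := by
    rw [div_mul_div_comm, map_mul, map_mul]
  rw [hrep, Dr_spec _ _ (mul_ne_zero hdu0 hdv0), Dr_spec _ _ hdu0, Dr_spec _ _ hdv0]
  simp only [derivative_mul, map_add, map_mul]
  field_simp
  ring

end Aux

section AuxP

variable {F : Type*} [Field F]

lemma DxP_monomial (n : ℕ) (c : RatFunc F) :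
    DxP (monomial n c) = C (Dr c) * X ^ n := by
  unfold DxP
  rw [Polynomial.sum_monomial_index]
  simp [Dr_zero]

lemma DxP_add (p q : (RatFunc F)[X]) : DxP (p + q) = DxP p + DxP q := by
  unfold DxP
  apply Polynomial.sum_add_index
  · intro i; simp [Dr_zero]
  · intro i b₁ b₂; rw [Dr_add, map_add, add_mul]

lemma DxP_mul (p q : (RatFunc F)[X]) : DxP (p * q) = DxP p * q + p * DxP q := by
  induction p using Polynomial.induction_on' with
  | add p1 p2 h1 h2 =>
    rw [add_mul, DxP_add, DxP_add, h1, h2]; ring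
  | monomial n a =>
    induction q using Polynomial.induction_on' with
    | add q1 q2 h1 h2 =>
      rw [mul_add, DxP_add, DxP_add, h1, h2]; ring
    | monomial m b =>
      rw [monomial_mul_monomial, DxP_monomial, DxP_monomial, DxP_monomial, Dr_mul,
        ← C_mul_X_pow_eq_monomial, ← C_mul_X_pow_eq_monomial, map_add, map_mul, map_mul,
        pow_add]
      ring

lemma DxP_pow_succ_dvd (p : (RatFunc F)[X]) (k : ℕ) : p ^ k ∣ DxP (p ^ (k + 1)) := by
  induction k with
  | zero => exact one_dvd _
  | succ k ih =>
    have hstep : DxP (p ^ (k + 1 + 1)) = DxP (p ^ (k + 1)) * p + p ^ (k + 1) * DxP p := by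
      rw [pow_succ, DxP_mul]
    rw [hstep]
    refine dvd_add ?_ (dvd_mul_right _ _)
    rw [pow_succ]
    exact mul_dvd_mul ih dvd_rfl

lemma dvd_mul_DxP (p d : (RatFunc F)[X]) (k : ℕ) (h : p ^ k ∣ d) :
    p ^ k ∣ p * DxP d := by
  obtain ⟨w, rfl⟩ := h
  cases k with
  | zero => exact one_dvd _
  | succ k =>
    rw [DxP_mul, mul_add]
    refine dvd_add ?_ ?_
    · have h1 : p ^ (k + 1) ∣ p * DxP (p ^ (k + 1)) := by
        have h2 := mul_dvd_mul (dvd_refl p) (DxP_pow_succ_dvd p k)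
        rwa [← pow_succ'] at h2
      rw [← mul_assoc]
      exact h1.mul_right w
    · rw [mul_left_comm]
      exact dvd_mul_right _ _

end AuxP

lemma dvd_of_prime_pow_dvd {α : Type*} [CommMonoidWithZero α]
    [UniqueFactorizationMonoid α] {b d : α} (hb : b ≠ 0) (hd : d ≠ 0)
    (H : ∀ p : α, Prime p → ∀ n : ℕ, p ^ n ∣ b → p ^ n ∣ d) : b ∣ d := by
  classical
  letI : StrongNormalizationMonoid α := UniqueFactorizationMonoid.normalizationMonoid
  rw [UniqueFactorizationMonoid.dvd_iff_normalizedFactors_le_normalizedFactors hb hd,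
    Multiset.le_iff_count]
  intro q
  by_cases hq : q ∈ UniqueFactorizationMonoid.normalizedFactors b
  · have hqp : Prime q := UniqueFactorizationMonoid.prime_of_normalized_factor _ hq
    have hqn : normalize q = q := UniqueFactorizationMonoid.normalize_normalized_factor _ hq
    have h1 := UniqueFactorizationMonoid.emultiplicity_eq_count_normalizedFactors
      hqp.irreducible hb
    have h2 := UniqueFactorizationMonoid.emultiplicity_eq_count_normalizedFactors
      hqp.irreducible hd
    have hle : emultiplicity q b ≤ emultiplicity q d :=
      emultiplicity_le_emultiplicity_iff.2 (H q hqp)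
    rw [h1, h2, hqn] at hle
    exact_mod_cast hle
  · simp [Multiset.count_eq_zero_of_notMem hq]

theorem stmt_10 {F : Type*} [Field F] [CharZero F] (f g : RatFunc (RatFunc F))
    (h : Dr f = DxR g) : f.denom ∣ g.denom := by
  classical
  haveI : CharZero (RatFunc F) :=
    charZero_of_injective_algebraMap (IsFractionRing.injective F[X] (RatFunc F))
  have hb0 : f.denom ≠ 0 := f.denom_ne_zero
  have hd0 : g.denom ≠ 0 := g.denom_ne_zero
  have hφb : algebraMap (Polynomial (RatFunc F)) (RatFunc (RatFunc F)) f.denom ≠ 0 :=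
    RatFunc.algebraMap_ne_zero hb0
  have hφd : algebraMap (Polynomial (RatFunc F)) (RatFunc (RatFunc F)) g.denom ≠ 0 :=
    RatFunc.algebraMap_ne_zero hd0
  unfold Dr DxR at h
  rw [div_eq_div_iff (pow_ne_zero 2 hφb) (pow_ne_zero 2 hφd)] at h
  have key : (derivative f.num * f.denom - f.num * derivative f.denom) * g.denom ^ 2
      = (DxP g.num * g.denom - g.num * DxP g.denom) * f.denom ^ 2 :=
    IsFractionRing.injective (Polynomial (RatFunc F)) (RatFunc (RatFunc F)) (by
      simpa only [map_mul, map_sub, map_pow] using h)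
  apply dvd_of_prime_pow_dvd hb0 hd0
  intro p hp n hn
  have hfb : FiniteMultiplicity p f.denom := FiniteMultiplicity.of_prime_left hp hb0
  have hfd : FiniteMultiplicity p g.denom := FiniteMultiplicity.of_prime_left hp hd0
  have hne : n ≤ multiplicity p f.denom := hfb.le_multiplicity_of_pow_dvd hn
  suffices hek : multiplicity p f.denom ≤ multiplicity p g.denom by
    exact dvd_trans (pow_dvd_pow p (hne.trans hek)) (pow_multiplicity_dvd p g.denom)
  by_contra hlt
  push_neg at hlt
  obtain ⟨u, hbe, hpu⟩ := hfb.exists_eq_pow_mul_and_not_dvd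
  obtain ⟨v, hde, hpv⟩ := hfd.exists_eq_pow_mul_and_not_dvd
  set k := multiplicity p g.denom with hkdef
  obtain ⟨e', hE⟩ : ∃ e', multiplicity p f.denom = e' + 1 := ⟨multiplicity p f.denom - 1, by omega⟩
  rw [hE] at hbe
  have hke : k ≤ e' := by omega
  have hpb : p ∣ f.denom := by
    rw [hbe]; exact Dvd.dvd.mul_right (dvd_pow_self p (Nat.succ_ne_zero e')) u
  have hpa : ¬ p ∣ f.num := fun hdvd =>
    hp.not_unit ((RatFunc.isCoprime_num_denom f).isUnit_of_dvd' hdvd hpb)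
  have hpp' : ¬ p ∣ derivative p := by
    have hdeg : p.natDegree ≠ 0 := (hp.irreducible.natDegree_pos).ne'
    have hne0 : derivative p ≠ 0 := fun h0 =>
      hdeg (Polynomial.natDegree_eq_zero_of_derivative_eq_zero h0)
    intro hdd
    have h3 := Polynomial.natDegree_le_of_dvd hdd hne0
    have h4 := Polynomial.natDegree_derivative_lt hdeg
    omega
  set a := f.num with hadef
  set W := p * derivative a * u - ((e' + 1 : ℕ) : (RatFunc F)[X]) * (a * derivative p * u) -
    p * (a * derivative u) with hWdef
  have hW : derivative a * f.denom - a * derivative f.denom = p ^ e' * W := by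
    rw [hbe, derivative_mul, derivative_pow]
    simp only [Nat.add_sub_cancel, Polynomial.C_eq_natCast]
    rw [hWdef]
    ring
  have hMdvd : p ^ k ∣ p * (DxP g.num * g.denom - g.num * DxP g.denom) := by
    rw [mul_sub]
    refine dvd_sub ?_ ?_
    · rw [← mul_assoc]
      exact Dvd.dvd.mul_left ⟨v, hde⟩ _
    · rw [mul_left_comm]
      exact Dvd.dvd.mul_left (dvd_mul_DxP p g.denom k ⟨v, hde⟩) g.num
  obtain ⟨M, hM⟩ := hMdvd
  have E2 : p ^ (e' + 2 * k + 1) * (W * v ^ 2) = p ^ (2 * e' + k + 2) * (M * u ^ 2) := by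
    calc p ^ (e' + 2 * k + 1) * (W * v ^ 2)
        = p * ((p ^ e' * W) * (p ^ k * v) ^ 2) := by ring
      _ = p * ((derivative a * f.denom - a * derivative f.denom) * g.denom ^ 2) := by
          rw [← hW, ← hde]
      _ = p * ((DxP g.num * g.denom - g.num * DxP g.denom) * f.denom ^ 2) := by rw [key]
      _ = (p * (DxP g.num * g.denom - g.num * DxP g.denom)) * f.denom ^ 2 := by ring
      _ = (p ^ k * M) * (p ^ (e' + 1) * u) ^ 2 := by rw [← hM, hbe]
      _ = p ^ (2 * e' + k + 2) * (M * u ^ 2) := by ring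
  have hdvd2 : p ^ (e' + 2 * k + 1) * p ∣ p ^ (e' + 2 * k + 1) * (W * v ^ 2) := by
    rw [← pow_succ, E2]
    exact dvd_mul_of_dvd_left (pow_dvd_pow p (by omega)) _
  have hWv : p ∣ W * v ^ 2 :=
    (mul_dvd_mul_iff_left (pow_ne_zero _ hp.ne_zero)).mp hdvd2
  rcases hp.dvd_mul.mp hWv with hW1 | hV1
  · have hN : p ∣ ((e' + 1 : ℕ) : (RatFunc F)[X]) * (a * derivative p * u) := by
      have h4 : ((e' + 1 : ℕ) : (RatFunc F)[X]) * (a * derivative p * u)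
          = p * derivative a * u - p * (a * derivative u) - W := by
        rw [hWdef]; ring
      rw [h4]
      exact dvd_sub (dvd_sub ⟨derivative a * u, by ring⟩ ⟨a * derivative u, by ring⟩) hW1
    rcases hp.dvd_mul.mp hN with hN1 | hau
    · have hunit : IsUnit ((e' + 1 : ℕ) : (RatFunc F)[X]) := by
        rw [← Polynomial.C_eq_natCast]
        exact Polynomial.isUnit_C.mpr
          (isUnit_iff_ne_zero.mpr (Nat.cast_ne_zero.mpr (Nat.succ_ne_zero e')))
      exact hp.not_unit (isUnit_of_dvd_unit hN1 hunit)
    · rcases hp.dvd_mul.mp hau with hap | hu1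
      · rcases hp.dvd_mul.mp hap with h5 | h5
        · exact hpa h5
        · exact hpp' h5
      · exact hpu hu1
  · exact hpv (hp.dvd_of_dvd_pow hV1)
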